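/- arXiv:1609.09380 — 4 statements merged into one kernel-verified Lean document; each statement's English description precedes it below -/
import Mathlib

section
/- Let X, Y be real-valued random variables with finite first moments, and let (X',Y'), (X'',Y'') be independent copies of (X,Y). Then E[|X-X'||Y-Y'|] - 2 E[|X-X'||Y-Y''|] + E[|X-X'|] E[|Y-Y'|] = E[U(X,X') V(Y,Y')], where U(x,x') = |x-x'| - E|x-X'| - E|X-x'| + E|X-X'| and V(y,y') = |y-y'| - E|y-Y'| - E|Y-y'| + E|Y-Y'|. -/
open MeasureTheory ProbabilityTheory

namespace Stmt0Aux

variable {ν : Measure (ℝ × ℝ)} [IsProbabilityMeasure ν]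

lemma gsm : StronglyMeasurable (fun t : ℝ => ∫ q : ℝ × ℝ, |t - q.1| ∂ν) := by
  apply MeasureTheory.StronglyMeasurable.integral_prod_right (f := fun (t : ℝ) (q : ℝ × ℝ) => |t - q.1|)
  exact (continuous_fst.sub (continuous_fst.comp continuous_snd)).abs.stronglyMeasurable

lemma hsm : StronglyMeasurable (fun t : ℝ => ∫ q : ℝ × ℝ, |t - q.2| ∂ν) := by
  apply MeasureTheory.StronglyMeasurable.integral_prod_right (f := fun (t : ℝ) (q : ℝ × ℝ) => |t - q.2|)
  exact (continuous_fst.sub (continuous_snd.comp continuous_snd)).abs.stronglyMeasurable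

theorem key
    (i1 : Integrable (fun p : ℝ × ℝ => p.1) ν) (i2 : Integrable (fun p : ℝ × ℝ => p.2) ν)
    (iab : Integrable (fun w : (ℝ × ℝ) × (ℝ × ℝ) => |w.1.1 - w.2.1| * |w.1.2 - w.2.2|) (ν.prod ν))
    (iF : Integrable (fun x : ((ℝ × ℝ) × (ℝ × ℝ)) × (ℝ × ℝ) =>
      |x.1.1.1 - x.1.2.1| * |x.1.1.2 - x.2.2|) ((ν.prod ν).prod ν)) :
    (∫ w : (ℝ × ℝ) × (ℝ × ℝ), |w.1.1 - w.2.1| * |w.1.2 - w.2.2| ∂(ν.prod ν))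
      - 2 * (∫ x : ((ℝ × ℝ) × (ℝ × ℝ)) × (ℝ × ℝ),
          |x.1.1.1 - x.1.2.1| * |x.1.1.2 - x.2.2| ∂((ν.prod ν).prod ν))
      + (∫ w : (ℝ × ℝ) × (ℝ × ℝ), |w.1.1 - w.2.1| ∂(ν.prod ν))
        * (∫ w : (ℝ × ℝ) × (ℝ × ℝ), |w.1.2 - w.2.2| ∂(ν.prod ν))
    = ∫ w : (ℝ × ℝ) × (ℝ × ℝ),
        (|w.1.1 - w.2.1| - (∫ q : ℝ × ℝ, |w.1.1 - q.1| ∂ν) - (∫ q : ℝ × ℝ, |w.2.1 - q.1| ∂ν)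
          + ∫ v : (ℝ × ℝ) × (ℝ × ℝ), |v.1.1 - v.2.1| ∂(ν.prod ν))
      * (|w.1.2 - w.2.2| - (∫ q : ℝ × ℝ, |w.1.2 - q.2| ∂ν) - (∫ q : ℝ × ℝ, |w.2.2 - q.2| ∂ν)
          + ∫ v : (ℝ × ℝ) × (ℝ × ℝ), |v.1.2 - v.2.2| ∂(ν.prod ν)) ∂(ν.prod ν) := by
  set c : ℝ := ∫ w : (ℝ × ℝ) × (ℝ × ℝ), |w.1.1 - w.2.1| ∂(ν.prod ν) with hc
  set d : ℝ := ∫ w : (ℝ × ℝ) × (ℝ × ℝ), |w.1.2 - w.2.2| ∂(ν.prod ν) with hd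
  set m1 : ℝ := ∫ w : (ℝ × ℝ) × (ℝ × ℝ), |w.1.1 - w.2.1| * |w.1.2 - w.2.2| ∂(ν.prod ν) with hm1
  set m2 : ℝ := ∫ x : ((ℝ × ℝ) × (ℝ × ℝ)) × (ℝ × ℝ),
      |x.1.1.1 - x.1.2.1| * |x.1.1.2 - x.2.2| ∂((ν.prod ν).prod ν) with hm2
  -- basic transfer helpers
  have hfst : (ν.prod ν).map Prod.fst = ν := by
    rw [Measure.map_fst_prod]; simp
  have hsnd : (ν.prod ν).map Prod.snd = ν := by
    rw [Measure.map_snd_prod]; simp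
  have comp_fst : ∀ {f : ℝ × ℝ → ℝ}, Integrable f ν →
      Integrable (fun w : (ℝ × ℝ) × (ℝ × ℝ) => f w.1) (ν.prod ν) := by
    intro f hf
    have h1 : Integrable f ((ν.prod ν).map Prod.fst) := by rwa [hfst]
    exact (integrable_map_measure h1.aestronglyMeasurable measurable_fst.aemeasurable).mp h1
  have comp_snd : ∀ {f : ℝ × ℝ → ℝ}, Integrable f ν →
      Integrable (fun w : (ℝ × ℝ) × (ℝ × ℝ) => f w.2) (ν.prod ν) := by
    intro f hf
    have h1 : Integrable f ((ν.prod ν).map Prod.snd) := by rwa [hsnd]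
    exact (integrable_map_measure h1.aestronglyMeasurable measurable_snd.aemeasurable).mp h1
  have int_fst : ∀ (f : ℝ × ℝ → ℝ), AEStronglyMeasurable f ν →
      ∫ w : (ℝ × ℝ) × (ℝ × ℝ), f w.1 ∂(ν.prod ν) = ∫ p, f p ∂ν := by
    intro f hf
    have h1 : AEStronglyMeasurable f ((ν.prod ν).map Prod.fst) := by rwa [hfst]
    have := integral_map (μ := ν.prod ν) measurable_fst.aemeasurable h1
    rw [hfst] at this
    exact this.symm
  have int_snd : ∀ (f : ℝ × ℝ → ℝ), AEStronglyMeasurable f ν →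
      ∫ w : (ℝ × ℝ) × (ℝ × ℝ), f w.2 ∂(ν.prod ν) = ∫ p, f p ∂ν := by
    intro f hf
    have h1 : AEStronglyMeasurable f ((ν.prod ν).map Prod.snd) := by rwa [hsnd]
    have := integral_map (μ := ν.prod ν) measurable_snd.aemeasurable h1
    rw [hsnd] at this
    exact this.symm
  -- swap helpers
  have swapI : ∀ f : ((ℝ × ℝ) × (ℝ × ℝ)) → ℝ,
      (∫ w : (ℝ × ℝ) × (ℝ × ℝ), f (w.2, w.1) ∂(ν.prod ν)) = ∫ w, f w ∂(ν.prod ν) := fun f =>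
    Measure.measurePreserving_swap.integral_comp MeasurableEquiv.prodComm.measurableEmbedding f
  have swapInt : ∀ {f : ((ℝ × ℝ) × (ℝ × ℝ)) → ℝ}, Integrable f (ν.prod ν) →
      Integrable (fun w : (ℝ × ℝ) × (ℝ × ℝ) => f (w.2, w.1)) (ν.prod ν) := fun {f} hf =>
    (Measure.measurePreserving_swap.integrable_comp_emb MeasurableEquiv.prodComm.measurableEmbedding).2 hf
  -- basic integrabilities
  have ia : Integrable (fun w : (ℝ × ℝ) × (ℝ × ℝ) => |w.1.1 - w.2.1|) (ν.prod ν) :=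
    ((comp_fst i1).sub (comp_snd i1)).abs
  have ib : Integrable (fun w : (ℝ × ℝ) × (ℝ × ℝ) => |w.1.2 - w.2.2|) (ν.prod ν) :=
    ((comp_fst i2).sub (comp_snd i2)).abs
  have ihp : ∀ t : ℝ, Integrable (fun q : ℝ × ℝ => |t - q.2|) ν := fun t =>
    ((integrable_const t).sub i2).abs
  have igν : Integrable (fun p : ℝ × ℝ => ∫ q : ℝ × ℝ, |p.1 - q.1| ∂ν) ν := ia.integral_prod_left
  have ihν : Integrable (fun p : ℝ × ℝ => ∫ q : ℝ × ℝ, |p.2 - q.2| ∂ν) ν := ib.integral_prod_left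
  -- permuted version of iF
  have iN : Integrable (fun x : ((ℝ × ℝ) × (ℝ × ℝ)) × (ℝ × ℝ) =>
      |x.1.1.1 - x.2.1| * |x.1.1.2 - x.1.2.2|) ((ν.prod ν).prod ν) := by
    have e1 := measurePreserving_prodAssoc ν ν ν
    have e2 : MeasurePreserving
        (Prod.map (id : ℝ × ℝ → ℝ × ℝ) (Prod.swap : (ℝ × ℝ) × (ℝ × ℝ) → (ℝ × ℝ) × (ℝ × ℝ)))
        (ν.prod (ν.prod ν)) (ν.prod (ν.prod ν)) := (MeasurePreserving.id ν).prod Measure.measurePreserving_swap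
    have e3 := e1.symm MeasurableEquiv.prodAssoc
    have mpσ : MeasurePreserving
        (fun x : ((ℝ × ℝ) × (ℝ × ℝ)) × (ℝ × ℝ) => ((x.1.1, x.2), x.1.2))
        ((ν.prod ν).prod ν) ((ν.prod ν).prod ν) := (e3.comp e2).comp e1
    have embσ : MeasurableEmbedding
        (fun x : ((ℝ × ℝ) × (ℝ × ℝ)) × (ℝ × ℝ) => ((x.1.1, x.2), x.1.2)) := by
      exact (MeasurableEquiv.prodAssoc.trans
        (((MeasurableEquiv.refl (ℝ × ℝ)).prodCongr MeasurableEquiv.prodComm).trans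
          MeasurableEquiv.prodAssoc.symm)).measurableEmbedding
    exact (mpσ.integrable_comp_emb embσ).2 iF
  -- atoms involving one inner integral
  have ha2 : Integrable (fun w : (ℝ × ℝ) × (ℝ × ℝ) =>
      |w.1.1 - w.2.1| * ∫ q : ℝ × ℝ, |w.1.2 - q.2| ∂ν) (ν.prod ν) := by
    have := iF.integral_prod_left
    simpa [integral_const_mul] using this
  have ha2' : Integrable (fun w : (ℝ × ℝ) × (ℝ × ℝ) =>
      |w.1.1 - w.2.1| * ∫ q : ℝ × ℝ, |w.2.2 - q.2| ∂ν) (ν.prod ν) := by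
    have := swapInt ha2
    exact this.congr (Filter.Eventually.of_forall fun w => by
      simp only [abs_sub_comm w.2.1 w.1.1])
  have hgb : Integrable (fun w : (ℝ × ℝ) × (ℝ × ℝ) =>
      (∫ q : ℝ × ℝ, |w.1.1 - q.1| ∂ν) * |w.1.2 - w.2.2|) (ν.prod ν) := by
    have := iN.integral_prod_left
    simpa [integral_mul_const] using this
  have hgb' : Integrable (fun w : (ℝ × ℝ) × (ℝ × ℝ) =>
      (∫ q : ℝ × ℝ, |w.2.1 - q.1| ∂ν) * |w.1.2 - w.2.2|) (ν.prod ν) := by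
    have := swapInt hgb
    exact this.congr (Filter.Eventually.of_forall fun w => by
      simp only [abs_sub_comm w.2.2 w.1.2])
  have φint : Integrable (fun p : ℝ × ℝ =>
      (∫ q : ℝ × ℝ, |p.1 - q.1| ∂ν) * ∫ q : ℝ × ℝ, |p.2 - q.2| ∂ν) ν := by
    have := ha2.integral_prod_left
    simpa [integral_mul_const] using this
  have hg1h1 : Integrable (fun w : (ℝ × ℝ) × (ℝ × ℝ) =>
      (∫ q : ℝ × ℝ, |w.1.1 - q.1| ∂ν) * ∫ q : ℝ × ℝ, |w.1.2 - q.2| ∂ν) (ν.prod ν) := comp_fst φint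
  have hg2h2 : Integrable (fun w : (ℝ × ℝ) × (ℝ × ℝ) =>
      (∫ q : ℝ × ℝ, |w.2.1 - q.1| ∂ν) * ∫ q : ℝ × ℝ, |w.2.2 - q.2| ∂ν) (ν.prod ν) := comp_snd φint
  have hg1h2 : Integrable (fun w : (ℝ × ℝ) × (ℝ × ℝ) =>
      (∫ q : ℝ × ℝ, |w.1.1 - q.1| ∂ν) * ∫ q : ℝ × ℝ, |w.2.2 - q.2| ∂ν) (ν.prod ν) :=
    igν.mul_prod ihν
  have hg2h1 : Integrable (fun w : (ℝ × ℝ) × (ℝ × ℝ) =>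
      (∫ q : ℝ × ℝ, |w.2.1 - q.1| ∂ν) * ∫ q : ℝ × ℝ, |w.1.2 - q.2| ∂ν) (ν.prod ν) :=
    (ihν.mul_prod igν).congr (Filter.Eventually.of_forall fun w => mul_comm _ _)
  -- values
  have vd : ∫ p : ℝ × ℝ, (∫ q : ℝ × ℝ, |p.2 - q.2| ∂ν) ∂ν = d := integral_integral ib
  have vhd : ∫ w : (ℝ × ℝ) × (ℝ × ℝ), (∫ q : ℝ × ℝ, |w.1.2 - q.2| ∂ν) ∂(ν.prod ν) = d :=
    (int_fst _ ihν.aestronglyMeasurable).trans vd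
  have vhd' : ∫ w : (ℝ × ℝ) × (ℝ × ℝ), (∫ q : ℝ × ℝ, |w.2.2 - q.2| ∂ν) ∂(ν.prod ν) = d :=
    (int_snd _ ihν.aestronglyMeasurable).trans vd
  have vAh1 : ∫ w : (ℝ × ℝ) × (ℝ × ℝ),
      |w.1.1 - w.2.1| * (∫ q : ℝ × ℝ, |w.1.2 - q.2| ∂ν) ∂(ν.prod ν) = m2 := by
    have h0 : (∫ w : (ℝ × ℝ) × (ℝ × ℝ), ∫ r : ℝ × ℝ,
        |w.1.1 - w.2.1| * |w.1.2 - r.2| ∂ν ∂(ν.prod ν)) = m2 := integral_integral iF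
    exact (integral_congr_ae (Filter.Eventually.of_forall fun w =>
      (integral_const_mul _ _).symm)).trans h0
  have vAh2 : ∫ w : (ℝ × ℝ) × (ℝ × ℝ),
      |w.1.1 - w.2.1| * (∫ q : ℝ × ℝ, |w.2.2 - q.2| ∂ν) ∂(ν.prod ν) = m2 := by
    have hs := swapI (fun v => |v.1.1 - v.2.1| * ∫ q : ℝ × ℝ, |v.1.2 - q.2| ∂ν)
    calc ∫ w : (ℝ × ℝ) × (ℝ × ℝ),
          |w.1.1 - w.2.1| * (∫ q : ℝ × ℝ, |w.2.2 - q.2| ∂ν) ∂(ν.prod ν)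
        = ∫ w : (ℝ × ℝ) × (ℝ × ℝ),
          |w.2.1 - w.1.1| * (∫ q : ℝ × ℝ, |w.2.2 - q.2| ∂ν) ∂(ν.prod ν) := by
          exact integral_congr_ae (Filter.Eventually.of_forall fun w => by
            simp only [abs_sub_comm w.1.1 w.2.1])
      _ = m2 := hs.trans vAh1
  -- inner centering
  have innerV : ∀ p : ℝ × ℝ, ∫ q : ℝ × ℝ,
      (|p.2 - q.2| - (∫ r : ℝ × ℝ, |p.2 - r.2| ∂ν) - (∫ r : ℝ × ℝ, |q.2 - r.2| ∂ν) + d) ∂ν = 0 := by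
    intro p
    have e1 : Integrable (fun q : ℝ × ℝ => |p.2 - q.2|) ν := ihp p.2
    have e2 : Integrable (fun _ : ℝ × ℝ => (∫ r : ℝ × ℝ, |p.2 - r.2| ∂ν)) ν := integrable_const _
    have e3 : Integrable (fun q : ℝ × ℝ => ∫ r : ℝ × ℝ, |q.2 - r.2| ∂ν) ν := ihν
    have e12 : Integrable (fun q : ℝ × ℝ =>
        |p.2 - q.2| - (∫ r : ℝ × ℝ, |p.2 - r.2| ∂ν)) ν := e1.sub e2
    have e123 : Integrable (fun q : ℝ × ℝ =>
        |p.2 - q.2| - (∫ r : ℝ × ℝ, |p.2 - r.2| ∂ν) - ∫ r : ℝ × ℝ, |q.2 - r.2| ∂ν) ν := e12.sub e3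
    rw [integral_add e123 (integrable_const d), integral_sub e12 e3, integral_sub e1 e2, vd]
    simp
  -- the three zero integrals
  have zero1 : ∫ w : (ℝ × ℝ) × (ℝ × ℝ), (∫ q : ℝ × ℝ, |w.1.1 - q.1| ∂ν) *
      (|w.1.2 - w.2.2| - (∫ q : ℝ × ℝ, |w.1.2 - q.2| ∂ν) - (∫ q : ℝ × ℝ, |w.2.2 - q.2| ∂ν) + d)
      ∂(ν.prod ν) = 0 := by
    have hint : Integrable (fun w : (ℝ × ℝ) × (ℝ × ℝ) => (∫ q : ℝ × ℝ, |w.1.1 - q.1| ∂ν) *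
        (|w.1.2 - w.2.2| - (∫ q : ℝ × ℝ, |w.1.2 - q.2| ∂ν) - (∫ q : ℝ × ℝ, |w.2.2 - q.2| ∂ν) + d))
        (ν.prod ν) := by
      have expand : (fun w : (ℝ × ℝ) × (ℝ × ℝ) => (∫ q : ℝ × ℝ, |w.1.1 - q.1| ∂ν) *
          (|w.1.2 - w.2.2| - (∫ q : ℝ × ℝ, |w.1.2 - q.2| ∂ν) - (∫ q : ℝ × ℝ, |w.2.2 - q.2| ∂ν) + d))
          = fun w : (ℝ × ℝ) × (ℝ × ℝ) =>
            (∫ q : ℝ × ℝ, |w.1.1 - q.1| ∂ν) * |w.1.2 - w.2.2|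
            - (∫ q : ℝ × ℝ, |w.1.1 - q.1| ∂ν) * (∫ q : ℝ × ℝ, |w.1.2 - q.2| ∂ν)
            - (∫ q : ℝ × ℝ, |w.1.1 - q.1| ∂ν) * (∫ q : ℝ × ℝ, |w.2.2 - q.2| ∂ν)
            + (∫ q : ℝ × ℝ, |w.1.1 - q.1| ∂ν) * d := by
        funext w; ring
      rw [expand]
      exact ((hgb.sub hg1h1).sub hg1h2).add ((comp_fst igν).mul_const d)
    have fub := integral_integral (f := fun (p q : ℝ × ℝ) => (∫ r : ℝ × ℝ, |p.1 - r.1| ∂ν) *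
        (|p.2 - q.2| - (∫ r : ℝ × ℝ, |p.2 - r.2| ∂ν) - (∫ r : ℝ × ℝ, |q.2 - r.2| ∂ν) + d)) hint
    refine Eq.trans fub.symm ?_
    show ∫ p : ℝ × ℝ, ∫ q : ℝ × ℝ, (∫ r : ℝ × ℝ, |p.1 - r.1| ∂ν) *
        (|p.2 - q.2| - (∫ r : ℝ × ℝ, |p.2 - r.2| ∂ν) - (∫ r : ℝ × ℝ, |q.2 - r.2| ∂ν) + d) ∂ν ∂ν = 0
    have step : ∀ p : ℝ × ℝ, (∫ q : ℝ × ℝ, ((∫ r : ℝ × ℝ, |p.1 - r.1| ∂ν) *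
        (|p.2 - q.2| - (∫ r : ℝ × ℝ, |p.2 - r.2| ∂ν) - (∫ r : ℝ × ℝ, |q.2 - r.2| ∂ν) + d)) ∂ν)
        = 0 := fun p => by rw [integral_const_mul, innerV p, mul_zero]
    simp only [step, integral_zero]
  have zero2 : ∫ w : (ℝ × ℝ) × (ℝ × ℝ), (∫ q : ℝ × ℝ, |w.2.1 - q.1| ∂ν) *
      (|w.1.2 - w.2.2| - (∫ q : ℝ × ℝ, |w.1.2 - q.2| ∂ν) - (∫ q : ℝ × ℝ, |w.2.2 - q.2| ∂ν) + d)
      ∂(ν.prod ν) = 0 := by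
    have hs := swapI (fun v => (∫ q : ℝ × ℝ, |v.1.1 - q.1| ∂ν) *
      (|v.1.2 - v.2.2| - (∫ q : ℝ × ℝ, |v.1.2 - q.2| ∂ν) - (∫ q : ℝ × ℝ, |v.2.2 - q.2| ∂ν) + d))
    calc ∫ w : (ℝ × ℝ) × (ℝ × ℝ), (∫ q : ℝ × ℝ, |w.2.1 - q.1| ∂ν) *
          (|w.1.2 - w.2.2| - (∫ q : ℝ × ℝ, |w.1.2 - q.2| ∂ν) - (∫ q : ℝ × ℝ, |w.2.2 - q.2| ∂ν) + d)
          ∂(ν.prod ν)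
        = ∫ w : (ℝ × ℝ) × (ℝ × ℝ), (∫ q : ℝ × ℝ, |w.2.1 - q.1| ∂ν) *
          (|w.2.2 - w.1.2| - (∫ q : ℝ × ℝ, |w.2.2 - q.2| ∂ν) - (∫ q : ℝ × ℝ, |w.1.2 - q.2| ∂ν) + d)
          ∂(ν.prod ν) := by
          exact integral_congr_ae (Filter.Eventually.of_forall fun w => by
            simp only [abs_sub_comm w.1.2 w.2.2]; ring)
      _ = 0 := hs.trans zero1
  have zeroB : ∫ w : (ℝ × ℝ) × (ℝ × ℝ),
      (|w.1.2 - w.2.2| - (∫ q : ℝ × ℝ, |w.1.2 - q.2| ∂ν) - (∫ q : ℝ × ℝ, |w.2.2 - q.2| ∂ν) + d)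
      ∂(ν.prod ν) = 0 := by
    have ihν1 : Integrable (fun w : (ℝ × ℝ) × (ℝ × ℝ) =>
        ∫ q : ℝ × ℝ, |w.1.2 - q.2| ∂ν) (ν.prod ν) := comp_fst ihν
    have ihν2 : Integrable (fun w : (ℝ × ℝ) × (ℝ × ℝ) =>
        ∫ q : ℝ × ℝ, |w.2.2 - q.2| ∂ν) (ν.prod ν) := comp_snd ihν
    have z1 : Integrable (fun w : (ℝ × ℝ) × (ℝ × ℝ) =>
        |w.1.2 - w.2.2| - ∫ q : ℝ × ℝ, |w.1.2 - q.2| ∂ν) (ν.prod ν) := ib.sub ihν1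
    have z2 : Integrable (fun w : (ℝ × ℝ) × (ℝ × ℝ) =>
        |w.1.2 - w.2.2| - (∫ q : ℝ × ℝ, |w.1.2 - q.2| ∂ν) - ∫ q : ℝ × ℝ, |w.2.2 - q.2| ∂ν)
        (ν.prod ν) := z1.sub ihν2
    rw [integral_add z2 (integrable_const d), integral_sub z1 ihν2, integral_sub ib ihν1,
      vhd, vhd', ← hd]
    simp
  -- main term
  have mainAB : ∫ w : (ℝ × ℝ) × (ℝ × ℝ), |w.1.1 - w.2.1| *
      (|w.1.2 - w.2.2| - (∫ q : ℝ × ℝ, |w.1.2 - q.2| ∂ν) - (∫ q : ℝ × ℝ, |w.2.2 - q.2| ∂ν) + d)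
      ∂(ν.prod ν) = m1 - m2 - m2 + c * d := by
    have expand : (fun w : (ℝ × ℝ) × (ℝ × ℝ) => |w.1.1 - w.2.1| *
        (|w.1.2 - w.2.2| - (∫ q : ℝ × ℝ, |w.1.2 - q.2| ∂ν) - (∫ q : ℝ × ℝ, |w.2.2 - q.2| ∂ν) + d))
        = fun w : (ℝ × ℝ) × (ℝ × ℝ) =>
          |w.1.1 - w.2.1| * |w.1.2 - w.2.2|
          - |w.1.1 - w.2.1| * (∫ q : ℝ × ℝ, |w.1.2 - q.2| ∂ν)
          - |w.1.1 - w.2.1| * (∫ q : ℝ × ℝ, |w.2.2 - q.2| ∂ν)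
          + |w.1.1 - w.2.1| * d := by
      funext w; ring
    have s1 : Integrable (fun w : (ℝ × ℝ) × (ℝ × ℝ) =>
        |w.1.1 - w.2.1| * |w.1.2 - w.2.2|
        - |w.1.1 - w.2.1| * (∫ q : ℝ × ℝ, |w.1.2 - q.2| ∂ν)) (ν.prod ν) := iab.sub ha2
    have s2 : Integrable (fun w : (ℝ × ℝ) × (ℝ × ℝ) =>
        |w.1.1 - w.2.1| * |w.1.2 - w.2.2|
        - |w.1.1 - w.2.1| * (∫ q : ℝ × ℝ, |w.1.2 - q.2| ∂ν)
        - |w.1.1 - w.2.1| * (∫ q : ℝ × ℝ, |w.2.2 - q.2| ∂ν)) (ν.prod ν) := s1.sub ha2'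
    rw [expand, integral_add s2 (ia.mul_const d),
      integral_sub s1 ha2', integral_sub iab ha2,
      vAh1, vAh2, integral_mul_const, ← hm1, ← hc]
  -- final assembly
  have expandAll : (fun w : (ℝ × ℝ) × (ℝ × ℝ) =>
      (|w.1.1 - w.2.1| - (∫ q : ℝ × ℝ, |w.1.1 - q.1| ∂ν) - (∫ q : ℝ × ℝ, |w.2.1 - q.1| ∂ν) + c)
      * (|w.1.2 - w.2.2| - (∫ q : ℝ × ℝ, |w.1.2 - q.2| ∂ν) - (∫ q : ℝ × ℝ, |w.2.2 - q.2| ∂ν) + d))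
      = fun w : (ℝ × ℝ) × (ℝ × ℝ) =>
        |w.1.1 - w.2.1| *
          (|w.1.2 - w.2.2| - (∫ q : ℝ × ℝ, |w.1.2 - q.2| ∂ν) - (∫ q : ℝ × ℝ, |w.2.2 - q.2| ∂ν) + d)
        - (∫ q : ℝ × ℝ, |w.1.1 - q.1| ∂ν) *
          (|w.1.2 - w.2.2| - (∫ q : ℝ × ℝ, |w.1.2 - q.2| ∂ν) - (∫ q : ℝ × ℝ, |w.2.2 - q.2| ∂ν) + d)
        - (∫ q : ℝ × ℝ, |w.2.1 - q.1| ∂ν) *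
          (|w.1.2 - w.2.2| - (∫ q : ℝ × ℝ, |w.1.2 - q.2| ∂ν) - (∫ q : ℝ × ℝ, |w.2.2 - q.2| ∂ν) + d)
        + c *
          (|w.1.2 - w.2.2| - (∫ q : ℝ × ℝ, |w.1.2 - q.2| ∂ν) - (∫ q : ℝ × ℝ, |w.2.2 - q.2| ∂ν) + d) := by
    funext w; ring
  have IA : Integrable (fun w : (ℝ × ℝ) × (ℝ × ℝ) => |w.1.1 - w.2.1| *
      (|w.1.2 - w.2.2| - (∫ q : ℝ × ℝ, |w.1.2 - q.2| ∂ν) - (∫ q : ℝ × ℝ, |w.2.2 - q.2| ∂ν) + d))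
      (ν.prod ν) := by
    have expand : (fun w : (ℝ × ℝ) × (ℝ × ℝ) => |w.1.1 - w.2.1| *
        (|w.1.2 - w.2.2| - (∫ q : ℝ × ℝ, |w.1.2 - q.2| ∂ν) - (∫ q : ℝ × ℝ, |w.2.2 - q.2| ∂ν) + d))
        = fun w : (ℝ × ℝ) × (ℝ × ℝ) =>
          |w.1.1 - w.2.1| * |w.1.2 - w.2.2|
          - |w.1.1 - w.2.1| * (∫ q : ℝ × ℝ, |w.1.2 - q.2| ∂ν)
          - |w.1.1 - w.2.1| * (∫ q : ℝ × ℝ, |w.2.2 - q.2| ∂ν)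
          + |w.1.1 - w.2.1| * d := by funext w; ring
    rw [expand]
    exact ((iab.sub ha2).sub ha2').add (ia.mul_const d)
  have IG1 : Integrable (fun w : (ℝ × ℝ) × (ℝ × ℝ) => (∫ q : ℝ × ℝ, |w.1.1 - q.1| ∂ν) *
      (|w.1.2 - w.2.2| - (∫ q : ℝ × ℝ, |w.1.2 - q.2| ∂ν) - (∫ q : ℝ × ℝ, |w.2.2 - q.2| ∂ν) + d))
      (ν.prod ν) := by
    have expand : (fun w : (ℝ × ℝ) × (ℝ × ℝ) => (∫ q : ℝ × ℝ, |w.1.1 - q.1| ∂ν) *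
        (|w.1.2 - w.2.2| - (∫ q : ℝ × ℝ, |w.1.2 - q.2| ∂ν) - (∫ q : ℝ × ℝ, |w.2.2 - q.2| ∂ν) + d))
        = fun w : (ℝ × ℝ) × (ℝ × ℝ) =>
          (∫ q : ℝ × ℝ, |w.1.1 - q.1| ∂ν) * |w.1.2 - w.2.2|
          - (∫ q : ℝ × ℝ, |w.1.1 - q.1| ∂ν) * (∫ q : ℝ × ℝ, |w.1.2 - q.2| ∂ν)
          - (∫ q : ℝ × ℝ, |w.1.1 - q.1| ∂ν) * (∫ q : ℝ × ℝ, |w.2.2 - q.2| ∂ν)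
          + (∫ q : ℝ × ℝ, |w.1.1 - q.1| ∂ν) * d := by funext w; ring
    rw [expand]
    exact ((hgb.sub hg1h1).sub hg1h2).add ((comp_fst igν).mul_const d)
  have IG2 : Integrable (fun w : (ℝ × ℝ) × (ℝ × ℝ) => (∫ q : ℝ × ℝ, |w.2.1 - q.1| ∂ν) *
      (|w.1.2 - w.2.2| - (∫ q : ℝ × ℝ, |w.1.2 - q.2| ∂ν) - (∫ q : ℝ × ℝ, |w.2.2 - q.2| ∂ν) + d))
      (ν.prod ν) := by
    have expand : (fun w : (ℝ × ℝ) × (ℝ × ℝ) => (∫ q : ℝ × ℝ, |w.2.1 - q.1| ∂ν) *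
        (|w.1.2 - w.2.2| - (∫ q : ℝ × ℝ, |w.1.2 - q.2| ∂ν) - (∫ q : ℝ × ℝ, |w.2.2 - q.2| ∂ν) + d))
        = fun w : (ℝ × ℝ) × (ℝ × ℝ) =>
          (∫ q : ℝ × ℝ, |w.2.1 - q.1| ∂ν) * |w.1.2 - w.2.2|
          - (∫ q : ℝ × ℝ, |w.2.1 - q.1| ∂ν) * (∫ q : ℝ × ℝ, |w.1.2 - q.2| ∂ν)
          - (∫ q : ℝ × ℝ, |w.2.1 - q.1| ∂ν) * (∫ q : ℝ × ℝ, |w.2.2 - q.2| ∂ν)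
          + (∫ q : ℝ × ℝ, |w.2.1 - q.1| ∂ν) * d := by funext w; ring
    rw [expand]
    exact ((hgb'.sub hg2h1).sub hg2h2).add ((comp_snd igν).mul_const d)
  have IC : Integrable (fun w : (ℝ × ℝ) × (ℝ × ℝ) => c *
      (|w.1.2 - w.2.2| - (∫ q : ℝ × ℝ, |w.1.2 - q.2| ∂ν) - (∫ q : ℝ × ℝ, |w.2.2 - q.2| ∂ν) + d))
      (ν.prod ν) :=
    (((ib.sub (comp_fst ihν)).sub (comp_snd ihν)).add (integrable_const d)).const_mul c
  have FS1 : Integrable (fun w : (ℝ × ℝ) × (ℝ × ℝ) =>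
      |w.1.1 - w.2.1| *
        (|w.1.2 - w.2.2| - (∫ q : ℝ × ℝ, |w.1.2 - q.2| ∂ν) - (∫ q : ℝ × ℝ, |w.2.2 - q.2| ∂ν) + d)
      - (∫ q : ℝ × ℝ, |w.1.1 - q.1| ∂ν) *
        (|w.1.2 - w.2.2| - (∫ q : ℝ × ℝ, |w.1.2 - q.2| ∂ν) - (∫ q : ℝ × ℝ, |w.2.2 - q.2| ∂ν) + d))
      (ν.prod ν) := IA.sub IG1
  have FS2 : Integrable (fun w : (ℝ × ℝ) × (ℝ × ℝ) =>
      |w.1.1 - w.2.1| *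
        (|w.1.2 - w.2.2| - (∫ q : ℝ × ℝ, |w.1.2 - q.2| ∂ν) - (∫ q : ℝ × ℝ, |w.2.2 - q.2| ∂ν) + d)
      - (∫ q : ℝ × ℝ, |w.1.1 - q.1| ∂ν) *
        (|w.1.2 - w.2.2| - (∫ q : ℝ × ℝ, |w.1.2 - q.2| ∂ν) - (∫ q : ℝ × ℝ, |w.2.2 - q.2| ∂ν) + d)
      - (∫ q : ℝ × ℝ, |w.2.1 - q.1| ∂ν) *
        (|w.1.2 - w.2.2| - (∫ q : ℝ × ℝ, |w.1.2 - q.2| ∂ν) - (∫ q : ℝ × ℝ, |w.2.2 - q.2| ∂ν) + d))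
      (ν.prod ν) := FS1.sub IG2
  rw [expandAll, integral_add FS2 IC, integral_sub FS1 IG2,
    integral_sub IA IG1, mainAB, zero1, zero2, integral_const_mul, zeroB]
  ring

end Stmt0Aux

/-- For integrable real random variables `X, Y` with i.i.d. copies
`(X',Y'), (X'',Y'')` (the three pairs mutually independent),
`E|X-X'||Y-Y'| - 2 E|X-X'||Y-Y''| + E|X-X'| E|Y-Y'| = E[U(X,X') V(Y,Y')]`,
where `U, V` are the double-centered distance functions. -/
theorem stmt0
    {Ω : Type*} [MeasurableSpace Ω] (μ : Measure Ω) [IsProbabilityMeasure μ]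
    (X Y X' Y' X'' Y'' : Ω → ℝ)
    (hmX : Measurable X) (hmY : Measurable Y) (hmX' : Measurable X')
    (hmY' : Measurable Y') (hmX'' : Measurable X'') (hmY'' : Measurable Y'')
    (hid' : IdentDistrib (fun ω => (X ω, Y ω)) (fun ω => (X' ω, Y' ω)) μ μ)
    (hid'' : IdentDistrib (fun ω => (X ω, Y ω)) (fun ω => (X'' ω, Y'' ω)) μ μ)
    (hindep : iIndepFun
      ![fun ω => (X ω, Y ω), fun ω => (X' ω, Y' ω), fun ω => (X'' ω, Y'' ω)] μ)
    (hX : Integrable X μ) (hY : Integrable Y μ)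
    (h1 : Integrable (fun ω => |X ω - X' ω| * |Y ω - Y' ω|) μ)
    (h2 : Integrable (fun ω => |X ω - X' ω| * |Y ω - Y'' ω|) μ)
    (U V : ℝ → ℝ → ℝ)
    (hU : ∀ x x', U x x' = |x - x'| - (∫ ω, |x - X' ω| ∂μ) - (∫ ω, |X ω - x'| ∂μ)
      + ∫ ω, |X ω - X' ω| ∂μ)
    (hV : ∀ y y', V y y' = |y - y'| - (∫ ω, |y - Y' ω| ∂μ) - (∫ ω, |Y ω - y'| ∂μ)
      + ∫ ω, |Y ω - Y' ω| ∂μ) :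
    (∫ ω, |X ω - X' ω| * |Y ω - Y' ω| ∂μ)
      - 2 * (∫ ω, |X ω - X' ω| * |Y ω - Y'' ω| ∂μ)
      + (∫ ω, |X ω - X' ω| ∂μ) * (∫ ω, |Y ω - Y' ω| ∂μ)
      = ∫ ω, U (X ω) (X' ω) * V (Y ω) (Y' ω) ∂μ := by
  have hZ : Measurable (fun ω => (X ω, Y ω)) := hmX.prodMk hmY
  have hZ' : Measurable (fun ω => (X' ω, Y' ω)) := hmX'.prodMk hmY'
  have hZ'' : Measurable (fun ω => (X'' ω, Y'' ω)) := hmX''.prodMk hmY''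
  set ν : Measure (ℝ × ℝ) := μ.map (fun ω => (X ω, Y ω)) with hν
  haveI hprob : IsProbabilityMeasure ν := Measure.isProbabilityMeasure_map hZ.aemeasurable
  have hmap' : μ.map (fun ω => (X' ω, Y' ω)) = ν := hid'.map_eq.symm
  have hmap'' : μ.map (fun ω => (X'' ω, Y'' ω)) = ν := hid''.map_eq.symm
  have hmeas3 : ∀ i : Fin 3, Measurable
      (![fun ω => (X ω, Y ω), fun ω => (X' ω, Y' ω), fun ω => (X'' ω, Y'' ω)] i) := by
    intro i
    fin_cases i
    · exact hZ
    · exact hZ'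
    · exact hZ''
  have I01 : IndepFun (fun ω => (X ω, Y ω)) (fun ω => (X' ω, Y' ω)) μ := by
    have := hindep.indepFun (i := 0) (j := 1) (by decide)
    simpa using this
  have I012 : IndepFun (fun ω => ((X ω, Y ω), (X' ω, Y' ω))) (fun ω => (X'' ω, Y'' ω)) μ := by
    have := hindep.indepFun_prodMk hmeas3 0 1 2 (by decide) (by decide)
    simpa using this
  have pairmap : μ.map (fun ω => ((X ω, Y ω), (X' ω, Y' ω))) = ν.prod ν := by
    rw [(indepFun_iff_map_prod_eq_prod_map_map hZ.aemeasurable hZ'.aemeasurable).mp I01,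
      hmap', hν]
  have triplemap : μ.map (fun ω => (((X ω, Y ω), (X' ω, Y' ω)), (X'' ω, Y'' ω)))
      = (ν.prod ν).prod ν := by
    rw [(indepFun_iff_map_prod_eq_prod_map_map (hZ.prodMk hZ').aemeasurable
      hZ''.aemeasurable).mp I012, pairmap, hmap'']
  -- continuity facts
  have contab : Continuous (fun w : (ℝ × ℝ) × (ℝ × ℝ) => |w.1.1 - w.2.1| * |w.1.2 - w.2.2|) := by
    fun_prop
  have contF : Continuous (fun x : ((ℝ × ℝ) × (ℝ × ℝ)) × (ℝ × ℝ) =>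
      |x.1.1.1 - x.1.2.1| * |x.1.1.2 - x.2.2|) := by fun_prop
  have conta : Continuous (fun w : (ℝ × ℝ) × (ℝ × ℝ) => |w.1.1 - w.2.1|) := by fun_prop
  have contb : Continuous (fun w : (ℝ × ℝ) × (ℝ × ℝ) => |w.1.2 - w.2.2|) := by fun_prop
  -- transfers of the integrals
  have T1 : ∫ ω, |X ω - X' ω| * |Y ω - Y' ω| ∂μ
      = ∫ w : (ℝ × ℝ) × (ℝ × ℝ), |w.1.1 - w.2.1| * |w.1.2 - w.2.2| ∂(ν.prod ν) := by
    rw [← pairmap, integral_map (hZ.prodMk hZ').aemeasurable contab.aestronglyMeasurable]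
  have T2 : ∫ ω, |X ω - X' ω| * |Y ω - Y'' ω| ∂μ
      = ∫ x : ((ℝ × ℝ) × (ℝ × ℝ)) × (ℝ × ℝ),
          |x.1.1.1 - x.1.2.1| * |x.1.1.2 - x.2.2| ∂((ν.prod ν).prod ν) := by
    rw [← triplemap, integral_map ((hZ.prodMk hZ').prodMk hZ'').aemeasurable
      contF.aestronglyMeasurable]
  have Tc : ∫ ω, |X ω - X' ω| ∂μ = ∫ w : (ℝ × ℝ) × (ℝ × ℝ), |w.1.1 - w.2.1| ∂(ν.prod ν) := by
    rw [← pairmap, integral_map (hZ.prodMk hZ').aemeasurable conta.aestronglyMeasurable]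
  have Td : ∫ ω, |Y ω - Y' ω| ∂μ = ∫ w : (ℝ × ℝ) × (ℝ × ℝ), |w.1.2 - w.2.2| ∂(ν.prod ν) := by
    rw [← pairmap, integral_map (hZ.prodMk hZ').aemeasurable contb.aestronglyMeasurable]
  have Tg : ∀ x : ℝ, ∫ ω, |x - X' ω| ∂μ = ∫ q : ℝ × ℝ, |x - q.1| ∂ν := by
    intro x
    rw [← hmap', integral_map hZ'.aemeasurable (Continuous.aestronglyMeasurable (by fun_prop))]
  have Tg2 : ∀ x' : ℝ, ∫ ω, |X ω - x'| ∂μ = ∫ q : ℝ × ℝ, |x' - q.1| ∂ν := by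
    intro x'
    have step : ∫ ω, |X ω - x'| ∂μ = ∫ p : ℝ × ℝ, |p.1 - x'| ∂ν := by
      rw [hν, integral_map hZ.aemeasurable (Continuous.aestronglyMeasurable (by fun_prop))]
    rw [step]
    exact integral_congr_ae (Filter.Eventually.of_forall fun q => abs_sub_comm _ _)
  have Th : ∀ y : ℝ, ∫ ω, |y - Y' ω| ∂μ = ∫ q : ℝ × ℝ, |y - q.2| ∂ν := by
    intro y
    rw [← hmap', integral_map hZ'.aemeasurable (Continuous.aestronglyMeasurable (by fun_prop))]
  have Th2 : ∀ y' : ℝ, ∫ ω, |Y ω - y'| ∂μ = ∫ q : ℝ × ℝ, |y' - q.2| ∂ν := by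
    intro y'
    have step : ∫ ω, |Y ω - y'| ∂μ = ∫ p : ℝ × ℝ, |p.2 - y'| ∂ν := by
      rw [hν, integral_map hZ.aemeasurable (Continuous.aestronglyMeasurable (by fun_prop))]
    rw [step]
    exact integral_congr_ae (Filter.Eventually.of_forall fun q => abs_sub_comm _ _)
  -- integrability transfers
  have i1 : Integrable (fun p : ℝ × ℝ => p.1) ν := by
    rw [hν]
    exact (integrable_map_measure (g := fun p : ℝ × ℝ => p.1)
      measurable_fst.aestronglyMeasurable hZ.aemeasurable).mpr hX
  have i2 : Integrable (fun p : ℝ × ℝ => p.2) ν := by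
    rw [hν]
    exact (integrable_map_measure (g := fun p : ℝ × ℝ => p.2)
      measurable_snd.aestronglyMeasurable hZ.aemeasurable).mpr hY
  have iab : Integrable (fun w : (ℝ × ℝ) × (ℝ × ℝ) =>
      |w.1.1 - w.2.1| * |w.1.2 - w.2.2|) (ν.prod ν) := by
    rw [← pairmap]
    exact (integrable_map_measure contab.aestronglyMeasurable
      (hZ.prodMk hZ').aemeasurable).mpr h1
  have iF : Integrable (fun x : ((ℝ × ℝ) × (ℝ × ℝ)) × (ℝ × ℝ) =>
      |x.1.1.1 - x.1.2.1| * |x.1.1.2 - x.2.2|) ((ν.prod ν).prod ν) := by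
    rw [← triplemap]
    exact (integrable_map_measure contF.aestronglyMeasurable
      ((hZ.prodMk hZ').prodMk hZ'').aemeasurable).mpr h2
  -- apply the key lemma
  rw [T1, T2, Tc, Td, Stmt0Aux.key i1 i2 iab iF]
  -- strong measurability of the centered integrand
  have gsm' : StronglyMeasurable (fun t : ℝ => ∫ q : ℝ × ℝ, |t - q.1| ∂ν) := Stmt0Aux.gsm
  have hsm' : StronglyMeasurable (fun t : ℝ => ∫ q : ℝ × ℝ, |t - q.2| ∂ν) := Stmt0Aux.hsm
  have sm : AEStronglyMeasurable (fun w : (ℝ × ℝ) × (ℝ × ℝ) =>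
      (|w.1.1 - w.2.1| - (∫ q : ℝ × ℝ, |w.1.1 - q.1| ∂ν) - (∫ q : ℝ × ℝ, |w.2.1 - q.1| ∂ν)
        + ∫ v : (ℝ × ℝ) × (ℝ × ℝ), |v.1.1 - v.2.1| ∂(ν.prod ν))
      * (|w.1.2 - w.2.2| - (∫ q : ℝ × ℝ, |w.1.2 - q.2| ∂ν) - (∫ q : ℝ × ℝ, |w.2.2 - q.2| ∂ν)
        + ∫ v : (ℝ × ℝ) × (ℝ × ℝ), |v.1.2 - v.2.2| ∂(ν.prod ν))) (ν.prod ν) := by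
    apply StronglyMeasurable.aestronglyMeasurable
    apply StronglyMeasurable.mul
    · exact ((conta.stronglyMeasurable.sub
        (gsm'.comp_measurable measurable_fst.fst)).sub
        (gsm'.comp_measurable measurable_snd.fst)).add stronglyMeasurable_const
    · exact ((contb.stronglyMeasurable.sub
        (hsm'.comp_measurable measurable_fst.snd)).sub
        (hsm'.comp_measurable measurable_snd.snd)).add stronglyMeasurable_const
  rw [← pairmap, integral_map (hZ.prodMk hZ').aemeasurable (by rw [pairmap]; exact sm)]
  apply integral_congr_ae
  filter_upwards with ω
  simp only [hU, hV, Tg, Tg2, Th, Th2, Tc, Td]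
  rw [pairmap]
end

section
/- For a square-integrable real random variable X (not almost surely constant) with independent copy X', the distance variance dCov²(X) = E[U(X,X')²] > 0, and dCov²(X) = 0 if and only if X is almost surely constant. -/
open MeasureTheory ProbabilityTheory Set

lemma quad_abs_lt {u v x x' y y' : ℝ} (hx : x ≤ u) (hx' : x' ≤ u)
    (hy : v ≤ y) (hy' : v ≤ y') (huv : u < v) :
    |x - x'| + |y - y'| < |x - y'| + |y - x'| := by
  have h1 : |x - y'| = y' - x := by
    rw [abs_of_nonpos (by linarith)]; ring
  have h2 : |y - x'| = y - x' := abs_of_nonneg (by linarith)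
  rcases abs_cases (x - x') with ⟨e1, l1⟩ | ⟨e1, l1⟩ <;>
  rcases abs_cases (y - y') with ⟨e2, l2⟩ | ⟨e2, l2⟩ <;>
  rw [e1, e2, h1, h2] <;> linarith

/-- For a square-integrable real random variable `X` with independent
copy `X'`, the distance variance `dCov²(X) = E[U(X,X')²]` is positive whenever `X` is
not a.s. constant, and it vanishes if and only if `X` is a.s. constant. -/
theorem stmt4
    {Ω : Type*} [MeasurableSpace Ω] (μ : Measure Ω) [IsProbabilityMeasure μ]
    (X X' : Ω → ℝ) (hmX : Measurable X) (hmX' : Measurable X')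
    (hid : IdentDistrib X X' μ μ) (hindep : IndepFun X X' μ)
    (hL2 : MemLp X 2 μ)
    (U : ℝ → ℝ → ℝ)
    (hU : ∀ x x', U x x' = |x - x'| - (∫ ω, |x - X' ω| ∂μ) - (∫ ω, |X ω - x'| ∂μ)
      + ∫ ω, |X ω - X' ω| ∂μ) :
    ((¬ ∃ c : ℝ, X =ᵐ[μ] fun _ => c) → 0 < ∫ ω, (U (X ω) (X' ω)) ^ 2 ∂μ) ∧
      ((∫ ω, (U (X ω) (X' ω)) ^ 2 ∂μ) = 0 ↔ ∃ c : ℝ, X =ᵐ[μ] fun _ => c) := by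
  have hL2' : MemLp X' 2 μ := hid.memLp_snd hL2
  have hXi : Integrable X μ := hL2.integrable one_le_two
  have hXi' : Integrable X' μ := hL2'.integrable one_le_two
  set ν := Measure.map X μ with hνdef
  haveI hPν : IsProbabilityMeasure ν := Measure.isProbabilityMeasure_map hmX.aemeasurable
  have hmapeq : Measure.map X' μ = ν := hid.map_eq.symm
  set m := ∫ ω, |X ω - X' ω| ∂μ with hmdef
  set a : ℝ → ℝ := fun t => ∫ ω, |t - X ω| ∂μ with hadef
  have hInta : ∀ t, Integrable (fun ω => |t - X ω|) μ := fun t =>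
    ((integrable_const t).sub hXi).abs
  have hswap : ∀ t, (∫ ω, |t - X' ω| ∂μ) = a t := by
    intro t
    have hmu : Measurable fun s : ℝ => |t - s| := (measurable_const.sub measurable_id).abs
    simpa [Function.comp, hadef] using ((hid.comp hmu).integral_eq).symm
  have hU' : ∀ x x', U x x' = |x - x'| - a x - a x' + m := by
    intro x x'
    rw [hU, hswap]
    have h2 : (∫ ω, |X ω - x'| ∂μ) = a x' := by
      rw [hadef]
      exact integral_congr_ae (Filter.Eventually.of_forall fun ω => abs_sub_comm _ _)
    rw [h2]
  have haLip : LipschitzWith 1 a := by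
    apply LipschitzWith.of_dist_le_mul
    intro s t
    simp only [Real.dist_eq, NNReal.coe_one, one_mul]
    have hsub : a s - a t = ∫ ω, (|s - X ω| - |t - X ω|) ∂μ :=
      (integral_sub (hInta s) (hInta t)).symm
    rw [hsub]
    have := norm_integral_le_of_norm_le_const (μ := μ)
      (f := fun ω => |s - X ω| - |t - X ω|) (C := |s - t|) ?_
    · simpa [measure_univ] using this
    · filter_upwards with ω
      rw [Real.norm_eq_abs]
      have he : (s - X ω) - (t - X ω) = s - t := by ring
      calc |(|s - X ω| - |t - X ω|)| ≤ |(s - X ω) - (t - X ω)| :=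
            abs_abs_sub_abs_le_abs_sub _ _
        _ = |s - t| := by rw [he]
  have haNonneg : ∀ t, 0 ≤ a t := fun t => integral_nonneg fun ω => abs_nonneg _
  set C := ∫ ω, |X ω| ∂μ with hCdef
  have hC0 : 0 ≤ C := integral_nonneg fun ω => abs_nonneg _
  have haBound : ∀ t, a t ≤ |t| + C := by
    intro t
    have hb : ∀ ω, |t - X ω| ≤ |t| + |X ω| := fun ω => by
      have := abs_add_le t (-X ω); simpa [sub_eq_add_neg] using this
    calc a t ≤ ∫ ω, (|t| + |X ω|) ∂μ :=
          integral_mono (hInta t) ((integrable_const _).add hXi.abs) hb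
      _ = |t| + C := by
          rw [integral_add (integrable_const _) hXi.abs, integral_const]
          simp [measure_univ, hCdef]
  have haMeas : Measurable a := haLip.continuous.measurable
  have memcomp : ∀ (Y : Ω → ℝ), Measurable Y → MemLp Y 2 μ →
      MemLp (fun ω => a (Y ω)) 2 μ := by
    intro Y hmY hYL2
    apply MemLp.of_le (hYL2.norm.add (memLp_const C))
      (haMeas.comp hmY).aestronglyMeasurable
    filter_upwards with ω
    simp only [Function.comp_apply, Pi.add_apply, Real.norm_eq_abs]
    rw [abs_of_nonneg (haNonneg _), abs_of_nonneg (add_nonneg (abs_nonneg _) hC0)]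
    exact haBound _
  have memaX : MemLp (fun ω => a (X ω)) 2 μ := memcomp X hmX hL2
  have memaX' : MemLp (fun ω => a (X' ω)) 2 μ := memcomp X' hmX' hL2'
  have hMem : MemLp (fun ω => U (X ω) (X' ω)) 2 μ := by
    have hfe : (fun ω => U (X ω) (X' ω)) =
        fun ω => ‖X ω - X' ω‖ - a (X ω) - a (X' ω) + m := by
      funext ω; rw [hU', Real.norm_eq_abs]
    rw [hfe]
    exact (((hL2.sub hL2').norm.sub memaX).sub memaX').add (memLp_const m)
  have hIntSq : Integrable (fun ω => (U (X ω) (X' ω)) ^ 2) μ := hMem.integrable_sq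
  have hZeroIff : (∫ ω, (U (X ω) (X' ω)) ^ 2 ∂μ) = 0 ↔
      ∀ᵐ ω ∂μ, U (X ω) (X' ω) = 0 := by
    rw [integral_eq_zero_iff_of_nonneg (fun ω => sq_nonneg _) hIntSq]
    constructor
    · intro h
      filter_upwards [h] with ω hω
      exact pow_eq_zero_iff two_ne_zero |>.mp (by simpa using hω)
    · intro h
      filter_upwards [h] with ω hω
      simp [hω]
  have key : (∀ᵐ ω ∂μ, U (X ω) (X' ω) = 0) → ∃ c : ℝ, X =ᵐ[μ] fun _ => c := by
    intro hae
    have hUc : Continuous (fun p : ℝ × ℝ => U p.1 p.2) := by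
      have hfe : (fun p : ℝ × ℝ => U p.1 p.2) =
          fun p : ℝ × ℝ => |p.1 - p.2| - a p.1 - a p.2 + m := by
        funext p; rw [hU']
      rw [hfe]
      exact ((((continuous_fst.sub continuous_snd).abs).sub
        (haLip.continuous.comp continuous_fst)).sub
        (haLip.continuous.comp continuous_snd)).add continuous_const
    have hmapprod : Measure.map (fun ω => (X ω, X' ω)) μ = ν.prod ν := by
      rw [(indepFun_iff_map_prod_eq_prod_map_map hmX.aemeasurable
        hmX'.aemeasurable).mp hindep, hmapeq]
    have hset : MeasurableSet {p : ℝ × ℝ | U p.1 p.2 = 0} :=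
      hUc.measurable (measurableSet_singleton 0)
    have haeprod : ∀ᵐ p ∂(ν.prod ν), U p.1 p.2 = 0 := by
      rw [← hmapprod]
      exact (ae_map_iff (hmX.prodMk hmX').aemeasurable hset).mpr hae
    have hG : ∀ᵐ x ∂ν, ∀ᵐ y ∂ν, U x y = 0 := Measure.ae_ae_of_ae_prod haeprod
    by_contra hnc
    obtain ⟨u, v, huv, hu, hv⟩ : ∃ u v : ℝ, u < v ∧ ν (Iic u) ≠ 0 ∧ ν (Ici v) ≠ 0 := by
      by_contra hcon
      push_neg at hcon
      have hup : ∃ n : ℕ, ν (Iic (n : ℝ)) ≠ 0 := by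
        by_contra h
        push_neg at h
        have h0 : ν (⋃ n : ℕ, Iic (n : ℝ)) = 0 := measure_iUnion_null h
        have huniv : (⋃ n : ℕ, Iic (n : ℝ)) = Set.univ := by
          ext t
          simp only [Set.mem_iUnion, Set.mem_Iic, Set.mem_univ, iff_true]
          exact ⟨⌈t⌉₊, Nat.le_ceil t⟩
        rw [huniv] at h0
        simp [measure_univ] at h0
      have hdown : ∃ n : ℕ, ν (Ici (-(n : ℝ))) ≠ 0 := by
        by_contra h
        push_neg at h
        have h0 : ν (⋃ n : ℕ, Ici (-(n : ℝ))) = 0 := measure_iUnion_null h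
        have huniv : (⋃ n : ℕ, Ici (-(n : ℝ))) = Set.univ := by
          ext t
          simp only [Set.mem_iUnion, Set.mem_Ici, Set.mem_univ, iff_true]
          obtain ⟨n, hn⟩ := exists_nat_ge (-t)
          exact ⟨n, by linarith⟩
        rw [huniv] at h0
        simp [measure_univ] at h0
      obtain ⟨n₀, hn₀⟩ := hup
      obtain ⟨n₁, hn₁⟩ := hdown
      set A : Set ℝ := {t | ν (Iic t) = 0} with hAdef
      have hA_ne : A.Nonempty := by
        refine ⟨-(n₁ : ℝ) - 1, ?_⟩
        by_contra hmem
        simp only [hAdef, Set.mem_setOf_eq] at hmem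
        exact hn₁ (hcon _ _ (by linarith) hmem)
      have hA_bdd : BddAbove A := by
        refine ⟨(n₀ : ℝ), fun t ht => ?_⟩
        by_contra hlt
        push_neg at hlt
        exact hn₀ (measure_mono_null (Iic_subset_Iic.mpr hlt.le) ht)
      set c := sSup A with hcdef
      have hlt : ∀ t, t < c → ν (Iic t) = 0 := by
        intro t ht
        obtain ⟨s, hsA, hts⟩ := exists_lt_of_lt_csSup hA_ne ht
        exact measure_mono_null (Iic_subset_Iic.mpr hts.le) hsA
      have hgt : ∀ t, c < t → ν (Ici t) = 0 := by
        intro t ht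
        have hmid : c < (c + t) / 2 := by linarith
        have hmid2 : (c + t) / 2 < t := by linarith
        have hnotA : ν (Iic ((c + t) / 2)) ≠ 0 := fun h =>
          absurd (le_csSup hA_bdd h) (not_le.mpr hmid)
        exact hcon _ _ hmid2 hnotA
      have hIio : ν (Iio c) = 0 := by
        have hsub : Iio c ⊆ ⋃ n : ℕ, Iic (c - 1 / (n + 1)) := by
          intro t ht
          obtain ⟨n, hn⟩ := exists_nat_one_div_lt (sub_pos.mpr (mem_Iio.mp ht))
          simp only [Set.mem_iUnion, Set.mem_Iic]
          exact ⟨n, by linarith⟩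
        exact measure_mono_null hsub (measure_iUnion_null fun n =>
          hlt _ (sub_lt_self c (by positivity)))
      have hIoi : ν (Ioi c) = 0 := by
        have hsub : Ioi c ⊆ ⋃ n : ℕ, Ici (c + 1 / (n + 1)) := by
          intro t ht
          obtain ⟨n, hn⟩ := exists_nat_one_div_lt (sub_pos.mpr (mem_Ioi.mp ht))
          simp only [Set.mem_iUnion, Set.mem_Ici]
          exact ⟨n, by linarith⟩
        exact measure_mono_null hsub (measure_iUnion_null fun n =>
          hgt _ (lt_add_of_pos_right c (by positivity)))
      apply hnc
      refine ⟨c, ?_⟩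
      show ∀ᵐ ω ∂μ, X ω = c
      rw [ae_iff]
      have hpre : {ω | ¬ X ω = c} = X ⁻¹' ({c}ᶜ) := rfl
      rw [hpre, ← Measure.map_apply hmX (measurableSet_singleton c).compl]
      rw [← Set.Iio_union_Ioi]
      exact measure_union_null hIio hIoi
    have hN : ν {x | ¬ ∀ᵐ y ∂ν, U x y = 0} = 0 := ae_iff.mp hG
    obtain ⟨x, hx1, hx2⟩ := nonempty_of_measure_ne_zero
      (show ν (Iic u \ {x | ¬ ∀ᵐ y ∂ν, U x y = 0}) ≠ 0 by
        rwa [measure_diff_null hN])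
    have hx : ∀ᵐ y ∂ν, U x y = 0 := not_not.mp hx2
    obtain ⟨y0, hy1, hy2⟩ := nonempty_of_measure_ne_zero
      (show ν (Ici v \ {x | ¬ ∀ᵐ y ∂ν, U x y = 0}) ≠ 0 by
        rwa [measure_diff_null hN])
    have hy : ∀ᵐ t ∂ν, U y0 t = 0 := not_not.mp hy2
    have hxy : ∀ᵐ t ∂ν, U x t = 0 ∧ U y0 t = 0 := hx.and hy
    have hNxy : ν {t | ¬ (U x t = 0 ∧ U y0 t = 0)} = 0 := ae_iff.mp hxy
    obtain ⟨x', hx'1, hx'2⟩ := nonempty_of_measure_ne_zero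
      (show ν (Iic u \ {t | ¬ (U x t = 0 ∧ U y0 t = 0)}) ≠ 0 by
        rwa [measure_diff_null hNxy])
    obtain ⟨y', hy'1, hy'2⟩ := nonempty_of_measure_ne_zero
      (show ν (Ici v \ {t | ¬ (U x t = 0 ∧ U y0 t = 0)}) ≠ 0 by
        rwa [measure_diff_null hNxy])
    obtain ⟨e1, e4⟩ := not_not.mp hx'2
    obtain ⟨e3, e2⟩ := not_not.mp hy'2
    have hiden : U x x' + U y0 y' - U x y' - U y0 x' =
        |x - x'| + |y0 - y'| - |x - y'| - |y0 - x'| := by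
      rw [hU', hU', hU', hU']; ring
    rw [e1, e2, e3, e4] at hiden
    have hq := quad_abs_lt hx1 hx'1 hy1 hy'1 huv
    linarith
  have hconst0 : (∃ c : ℝ, X =ᵐ[μ] fun _ => c) →
      (∫ ω, (U (X ω) (X' ω)) ^ 2 ∂μ) = 0 := by
    rintro ⟨c, hc⟩
    have hc' : X' =ᵐ[μ] fun _ => c := by
      have h1 : μ {ω | ¬ X ω = c} = 0 := ae_iff.mp hc
      have h2 : ν ({c}ᶜ) = 0 := by
        rw [hνdef, Measure.map_apply hmX (measurableSet_singleton c).compl]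
        exact h1
      have h3 : Measure.map X' μ ({c}ᶜ) = 0 := by rw [hmapeq]; exact h2
      rw [Measure.map_apply hmX' (measurableSet_singleton c).compl] at h3
      show ∀ᵐ ω ∂μ, X' ω = c
      rw [ae_iff]
      exact h3
    have hac : a c = 0 := by
      have hrfl : a c = ∫ ω, |c - X ω| ∂μ := rfl
      rw [hrfl]
      have : (fun ω => |c - X ω|) =ᵐ[μ] fun _ => (0 : ℝ) := by
        filter_upwards [hc] with ω h1
        simp [h1]
      rw [integral_congr_ae this, integral_zero]
    have hm0 : m = 0 := by
      have hrfl : m = ∫ ω, |X ω - X' ω| ∂μ := rfl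
      rw [hrfl]
      have : (fun ω => |X ω - X' ω|) =ᵐ[μ] fun _ => (0 : ℝ) := by
        filter_upwards [hc, hc'] with ω h1 h2
        simp [h1, h2]
      rw [integral_congr_ae this, integral_zero]
    have hUcc : U c c = 0 := by
      rw [hU' c c, hac, hm0]; simp
    have hz : (fun ω => (U (X ω) (X' ω)) ^ 2) =ᵐ[μ] fun _ => (0 : ℝ) := by
      filter_upwards [hc, hc'] with ω h1 h2
      simp only [h1, h2, hUcc]
      norm_num
    rw [integral_congr_ae hz, integral_zero]
  have hIff : (∫ ω, (U (X ω) (X' ω)) ^ 2 ∂μ) = 0 ↔ ∃ c, X =ᵐ[μ] fun _ => c :=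
    ⟨fun h => key (hZeroIff.mp h), hconst0⟩
  refine ⟨fun hnc => ?_, hIff⟩
  have hnonneg : 0 ≤ ∫ ω, (U (X ω) (X' ω)) ^ 2 ∂μ := integral_nonneg fun ω => sq_nonneg _
  rcases hnonneg.lt_or_eq with h | h
  · exact h
  · exact absurd (hIff.mp h.symm) hnc
end

section
/- Define f(ρ) = (4/π)[ρ·arcsin(ρ) + √(1-ρ²) − ρ·arcsin(ρ/2) − √(4-ρ²) + 1] for ρ ∈ [-1,1]. Then f(0) = 0, f(ρ) ≥ 0 for all ρ, and there exist positive constants c₁, c₂ such that c₁ ρ² ≤ f(ρ) ≤ c₂ ρ² for all ρ ∈ [-1,1]. -/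
open Real

private noncomputable def g6 (x : ℝ) : ℝ :=
  x * arcsin x + Real.sqrt (1 - x ^ 2) - x * arcsin (x / 2) - Real.sqrt (4 - x ^ 2) + 1

private lemma sqrt4 : Real.sqrt 4 = 2 := by
  rw [show (4:ℝ) = 2 ^ 2 by norm_num, Real.sqrt_sq (by norm_num)]

private lemma g6_zero : g6 0 = 0 := by
  simp [g6, sqrt4]
  norm_num

private lemma g6_even (x : ℝ) : g6 (-x) = g6 x := by
  simp only [g6, Real.arcsin_neg, neg_div, neg_sq]
  ring

private lemma g6_cont : Continuous g6 := by
  unfold g6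
  have h1 : Continuous fun x : ℝ => arcsin x := Real.continuous_arcsin
  have h2 : Continuous fun x : ℝ => arcsin (x / 2) :=
    Real.continuous_arcsin.comp (continuous_id.div_const 2)
  fun_prop

private lemma le_arcsin' {t : ℝ} (h0 : 0 ≤ t) (h1 : t ≤ 1) : t ≤ arcsin t := by
  have := Real.sin_le (Real.arcsin_nonneg.2 h0)
  rwa [Real.sin_arcsin (by linarith) h1] at this

private lemma arcsin_le' {t : ℝ} (h0 : 0 ≤ t) (h1 : t ≤ 1) : arcsin t ≤ π / 2 * t := by
  have h := Real.mul_le_sin (Real.arcsin_nonneg.2 h0) (Real.arcsin_le_pi_div_two t)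
  rw [Real.sin_arcsin (by linarith) h1] at h
  have hπ : (0:ℝ) < π := Real.pi_pos
  calc arcsin t = π / 2 * (2 / π * arcsin t) := by field_simp
    _ ≤ π / 2 * t := by
        exact mul_le_mul_of_nonneg_left h (by positivity)

private lemma g6_deriv {x : ℝ} (h1 : -1 < x) (h2 : x < 1) :
    HasDerivAt g6 (arcsin x - arcsin (x / 2)) x := by
  have hx1 : (0:ℝ) < 1 - x ^ 2 := by nlinarith
  have hx4 : (0:ℝ) < 4 - x ^ 2 := by nlinarith
  have hs1 : Real.sqrt (1 - x ^ 2) ≠ 0 := by positivity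
  have hs4 : Real.sqrt (4 - x ^ 2) ≠ 0 := by positivity
  have hs1' : Real.sqrt (1 - x ^ 2) > 0 := Real.sqrt_pos.2 hx1
  have hs4' : Real.sqrt (4 - x ^ 2) > 0 := Real.sqrt_pos.2 hx4
  -- arcsin part
  have hA : HasDerivAt (fun x : ℝ => x * arcsin x)
      (arcsin x + x * (1 / Real.sqrt (1 - x ^ 2))) x := by
    simpa [add_comm, Pi.mul_def] using
      (hasDerivAt_id x).mul (Real.hasDerivAt_arcsin (by linarith) (by linarith))
  have hhalf : HasDerivAt (fun x : ℝ => arcsin (x / 2))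
      (1 / Real.sqrt (1 - (x / 2) ^ 2) * (1 / 2)) x := by
    exact (Real.hasDerivAt_arcsin (by linarith) (by linarith)).comp x
      ((hasDerivAt_id x).div_const 2)
  have hB : HasDerivAt (fun x : ℝ => x * arcsin (x / 2))
      (arcsin (x / 2) + x * (1 / Real.sqrt (1 - (x / 2) ^ 2) * (1 / 2))) x := by
    simpa [add_comm, Pi.mul_def] using (hasDerivAt_id x).mul hhalf
  have hC1 : HasDerivAt (fun x : ℝ => Real.sqrt (1 - x ^ 2))
      ((0 - 2 * x) / (2 * Real.sqrt (1 - x ^ 2))) x := by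
    have hinner : HasDerivAt (fun x : ℝ => 1 - x ^ 2) (0 - 2 * x) x := by
      simpa [Pi.sub_def] using (hasDerivAt_const x (1:ℝ)).sub ((hasDerivAt_pow 2 x))
    simpa [Function.comp_def, div_eq_mul_inv, mul_comm] using
      (Real.hasDerivAt_sqrt (ne_of_gt hx1)).comp x hinner
  have hC4 : HasDerivAt (fun x : ℝ => Real.sqrt (4 - x ^ 2))
      ((0 - 2 * x) / (2 * Real.sqrt (4 - x ^ 2))) x := by
    have hinner : HasDerivAt (fun x : ℝ => 4 - x ^ 2) (0 - 2 * x) x := by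
      simpa [Pi.sub_def] using (hasDerivAt_const x (4:ℝ)).sub ((hasDerivAt_pow 2 x))
    simpa [Function.comp_def, div_eq_mul_inv, mul_comm] using
      (Real.hasDerivAt_sqrt (ne_of_gt hx4)).comp x hinner
  have h : HasDerivAt g6
      (arcsin x + x * (1 / Real.sqrt (1 - x ^ 2)) + (0 - 2 * x) / (2 * Real.sqrt (1 - x ^ 2))
        - (arcsin (x / 2) + x * (1 / Real.sqrt (1 - (x / 2) ^ 2) * (1 / 2)))
        - (0 - 2 * x) / (2 * Real.sqrt (4 - x ^ 2)) + 0) x := by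
    exact ((((hA.add hC1).sub hB).sub hC4).add (hasDerivAt_const x 1))
  convert h using 1
  have hkey : Real.sqrt (1 - (x / 2) ^ 2) = Real.sqrt (4 - x ^ 2) / 2 := by
    rw [show (1 - (x / 2) ^ 2) = (4 - x ^ 2) / 4 by ring,
      Real.sqrt_div (le_of_lt hx4), sqrt4]
  rw [hkey]
  field_simp
  ring


private lemma pi_lt4 : π < 4 := by linarith [Real.pi_lt_d2]

private lemma g6_lower : ∀ x ∈ Set.Icc (0:ℝ) 1, (1/2 - π/8) * x ^ 2 ≤ g6 x := by
  set a : ℝ := 1/2 - π/8 with ha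
  have hmono : MonotoneOn (fun x => g6 x - a * x ^ 2) (Set.Icc (0:ℝ) 1) := by
    apply monotoneOn_of_deriv_nonneg (convex_Icc 0 1)
    · exact (g6_cont.sub (by fun_prop)).continuousOn
    · intro x hx
      rw [interior_Icc] at hx
      exact ((g6_deriv (by linarith [hx.1]) hx.2).sub
        ((hasDerivAt_pow 2 x).const_mul a)).differentiableAt.differentiableWithinAt
    · intro x hx
      rw [interior_Icc] at hx
      have hd := (g6_deriv (by linarith [hx.1]) hx.2).sub ((hasDerivAt_pow 2 x).const_mul a)
      rw [show (fun x => g6 x - a * x ^ 2) = (g6 - fun y => a * y ^ 2) from rfl, hd.deriv]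
      have h1 := le_arcsin' hx.1.le hx.2.le
      have h2 := arcsin_le' (t := x/2) (by linarith [hx.1]) (by linarith [hx.2])
      have hπ : (0:ℝ) < π := Real.pi_pos
      have : π / 2 * (x / 2) = π * x / 4 := by ring
      rw [this] at h2
      have hx0 : 0 ≤ x := hx.1.le
      nlinarith [hx.1, hx.2]
  intro x hx
  have h := hmono (Set.left_mem_Icc.2 (by norm_num)) hx hx.1
  simp only [g6_zero] at h
  nlinarith [h]

private lemma g6_upper : ∀ x ∈ Set.Icc (0:ℝ) 1, g6 x ≤ π/4 * x ^ 2 := by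
  have hmono : MonotoneOn (fun x => π/4 * x ^ 2 - g6 x) (Set.Icc (0:ℝ) 1) := by
    apply monotoneOn_of_deriv_nonneg (convex_Icc 0 1)
    · exact ((by fun_prop : Continuous fun x : ℝ => π/4 * x ^ 2).sub g6_cont).continuousOn
    · intro x hx
      rw [interior_Icc] at hx
      exact (((hasDerivAt_pow 2 x).const_mul (π/4)).sub
        (g6_deriv (by linarith [hx.1]) hx.2)).differentiableAt.differentiableWithinAt
    · intro x hx
      rw [interior_Icc] at hx
      have hd := ((hasDerivAt_pow 2 x).const_mul (π/4)).sub (g6_deriv (by linarith [hx.1]) hx.2)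
      rw [show (fun x => π / 4 * x ^ 2 - g6 x) = ((fun y => π / 4 * y ^ 2) - g6) from rfl, hd.deriv]
      have h1 := arcsin_le' hx.1.le hx.2.le
      have h2 : 0 ≤ arcsin (x/2) := Real.arcsin_nonneg.2 (by linarith [hx.1])
      have hπ : (0:ℝ) < π := Real.pi_pos
      have hx0 : 0 ≤ x := hx.1.le
      nlinarith
  intro x hx
  have h := hmono (Set.left_mem_Icc.2 (by norm_num)) hx hx.1
  simp only [g6_zero] at h
  nlinarith [h]

private lemma g6_bound : ∀ x ∈ Set.Icc (-1:ℝ) 1,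
    (1/2 - π/8) * x ^ 2 ≤ g6 x ∧ g6 x ≤ π/4 * x ^ 2 := by
  intro x hx
  rcases le_or_gt 0 x with h | h
  · exact ⟨g6_lower x ⟨h, hx.2⟩, g6_upper x ⟨h, hx.2⟩⟩
  · have hmem : -x ∈ Set.Icc (0:ℝ) 1 := ⟨by linarith, by linarith [hx.1]⟩
    have h1 := g6_lower (-x) hmem
    have h2 := g6_upper (-x) hmem
    rw [g6_even, neg_sq] at h1 h2
    exact ⟨h1, h2⟩

/-- For
`f(ρ) = (4/π)[ρ·arcsin ρ + √(1-ρ²) − ρ·arcsin(ρ/2) − √(4-ρ²) + 1]` on `[-1,1]`: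
`f(0) = 0`, `f ≥ 0`, and `f` is comparable to `ρ²` from above and below. -/
theorem stmt6
    (f : ℝ → ℝ)
    (hf : ∀ ρ, f ρ = (4 / π) * (ρ * arcsin ρ + Real.sqrt (1 - ρ ^ 2)
      - ρ * arcsin (ρ / 2) - Real.sqrt (4 - ρ ^ 2) + 1)) :
    f 0 = 0 ∧ (∀ ρ ∈ Set.Icc (-1 : ℝ) 1, 0 ≤ f ρ) ∧
      ∃ c₁ c₂ : ℝ, 0 < c₁ ∧ 0 < c₂ ∧
        ∀ ρ ∈ Set.Icc (-1 : ℝ) 1, c₁ * ρ ^ 2 ≤ f ρ ∧ f ρ ≤ c₂ * ρ ^ 2 := by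
  have hπ : (0:ℝ) < π := Real.pi_pos
  have hfg : ∀ ρ, f ρ = 4 / π * g6 ρ := fun ρ => hf ρ
  have ha : (0:ℝ) < 1/2 - π/8 := by linarith [pi_lt4]
  have hbnd : ∀ ρ ∈ Set.Icc (-1:ℝ) 1,
      4/π * ((1/2 - π/8) * ρ ^ 2) ≤ f ρ ∧ f ρ ≤ 4/π * (π/4 * ρ ^ 2) := by
    intro ρ hρ
    obtain ⟨h1, h2⟩ := g6_bound ρ hρ
    rw [hfg]
    constructor
    · exact mul_le_mul_of_nonneg_left h1 (by positivity)
    · exact mul_le_mul_of_nonneg_left h2 (by positivity)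
  refine ⟨by rw [hfg, g6_zero, mul_zero], ?_, 4/π * (1/2 - π/8), 1, by positivity,
    one_pos, ?_⟩
  · intro ρ hρ
    have := (hbnd ρ hρ).1
    have h0 : (0:ℝ) ≤ 4/π * ((1/2 - π/8) * ρ ^ 2) := by positivity
    linarith
  · intro ρ hρ
    obtain ⟨h1, h2⟩ := hbnd ρ hρ
    constructor
    · calc 4/π * (1/2 - π/8) * ρ ^ 2 = 4/π * ((1/2 - π/8) * ρ ^ 2) := by ring
        _ ≤ f ρ := h1
    · calc f ρ ≤ 4/π * (π/4 * ρ ^ 2) := h2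
        _ = 1 * ρ ^ 2 := by field_simp
end

section
/- The multivariate distance covariance MdCov does not completely characterize mutual independence: if W^(1) is degenerate at 0 and (W^(2),...,W^(p)) are dependent, then MdCov²(W;a) = 0 while W^(1),...,W^(p) are not mutually independent. -/
open MeasureTheory ProbabilityTheory

/-- MdCov does not completely characterize mutual independence: if the
first coordinate `W^(1)` is degenerate at `0` and the remaining coordinates are
dependent, then `MdCov²(W;a) = 0` (each term of the V-statistic representation
vanishes, since `K(0,0) = 0`) while the coordinates are not mutually independent. -/
theorem stmt11
    {Ω : Type*} [MeasurableSpace Ω] (μ : Measure Ω) [IsProbabilityMeasure μ]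
    {p : ℕ} (W : Ω → Fin (p + 1) → ℝ) (hmW : Measurable W)
    (a : ℝ) (ha : 0 < a) (ha2 : a < 2)
    (K : ℝ → ℝ → ℝ) (hK : ∀ w w', K w w' = |w| ^ a + |w'| ^ a - |w - w'| ^ a)
    (hdeg : ∀ᵐ ω ∂μ, W ω 0 = 0)
    (hdep : ¬ iIndepFun
      (fun (i : Fin p) ω => W ω i.succ) μ) :
    ((∫ ω, ∫ ω', ∏ i : Fin (p + 1), K (W ω i) (W ω' i) ∂μ ∂μ)
        + (∏ i : Fin (p + 1), ∫ ω, ∫ ω', K (W ω i) (W ω' i) ∂μ ∂μ)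
        - 2 * ∫ ω, ∏ i : Fin (p + 1), ∫ ω', K (W ω i) (W ω' i) ∂μ ∂μ) = 0 ∧
      ¬ iIndepFun
        (fun (i : Fin (p + 1)) ω => W ω i) μ := by
  have hK0 : ∀ w', K 0 w' = 0 := by
    intro w'
    rw [hK]
    simp [Real.zero_rpow ha.ne']
  have e1 : (∫ ω, ∫ ω', ∏ i : Fin (p + 1), K (W ω i) (W ω' i) ∂μ ∂μ) = 0 := by
    rw [← integral_zero (α := Ω) (μ := μ) (G := ℝ)]
    apply integral_congr_ae
    filter_upwards [hdeg] with ω hω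
    have : ∀ ω', ∏ i : Fin (p + 1), K (W ω i) (W ω' i) = 0 := fun ω' =>
      Finset.prod_eq_zero (Finset.mem_univ 0) (by rw [hω]; exact hK0 _)
    simp [this]
  have e2 : (∫ ω, ∫ ω', K (W ω 0) (W ω' 0) ∂μ ∂μ) = 0 := by
    rw [← integral_zero (α := Ω) (μ := μ) (G := ℝ)]
    apply integral_congr_ae
    filter_upwards [hdeg] with ω hω
    simp [hω, hK0]
  have e3 : (∫ ω, ∏ i : Fin (p + 1), ∫ ω', K (W ω i) (W ω' i) ∂μ ∂μ) = 0 := by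
    rw [← integral_zero (α := Ω) (μ := μ) (G := ℝ)]
    apply integral_congr_ae
    filter_upwards [hdeg] with ω hω
    exact Finset.prod_eq_zero (Finset.mem_univ 0) (by simp [hω, hK0])
  refine ⟨by rw [e1, e3, Finset.prod_eq_zero (Finset.mem_univ 0) e2]; ring, ?_⟩
  intro h
  apply hdep
  rw [iIndepFun_iff_measure_inter_preimage_eq_mul] at h ⊢
  intro S sets hsets
  classical
  set sets' : Fin (p + 1) → Set ℝ := Fin.cases Set.univ sets with hsets'
  have hs0 : ∀ i : Fin p, sets' i.succ = sets i := fun i => by simp [hsets']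
  have hinj : Set.InjOn Fin.succ (S : Set (Fin p)) :=
    (Fin.succ_injective p).injOn
  have key := h (S.image Fin.succ) (sets := sets') ?_
  · have hI : (⋂ j ∈ S.image Fin.succ, (fun ω => W ω j) ⁻¹' sets' j)
        = ⋂ i ∈ S, (fun ω => W ω i.succ) ⁻¹' sets i := by
      rw [← Finset.set_biInter_coe, Finset.coe_image, Set.biInter_image,
        ← Finset.set_biInter_coe]
      exact Set.iInter₂_congr fun i _ => by rw [hs0]
    have hP : (∏ j ∈ S.image Fin.succ, μ ((fun ω => W ω j) ⁻¹' sets' j))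
        = ∏ i ∈ S, μ ((fun ω => W ω i.succ) ⁻¹' sets i) := by
      rw [Finset.prod_image (fun i _ j _ h => Fin.succ_injective p h)]
      exact Finset.prod_congr rfl fun i _ => by rw [hs0]
    rw [hI, hP] at key
    exact key
  · intro j hj
    obtain ⟨i, hi, rfl⟩ := Finset.mem_image.mp hj
    rw [hs0]
    exact hsets i hi
end
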